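/- Let m ≥ 1 be an integer, b₂ ≠ 0 a real number, and consider the points x_k = kπ/m for k = 0, 1, ..., 2m−1. Then for every trigonometric polynomial q of degree at most m−1, (1/(2m)) · ∑_{k=0}^{2m−1} ( q(kπ/m) + b₂ cos(m·kπ/m) )² ≥ b₂². -/

import Mathlib

open Real

lemma key_complex (m j : ℕ) (hm : 1 ≤ m) (hj1 : 1 ≤ j) (hj2 : j ≤ m - 1) :
    ∑ k ∈ Finset.range (2 * m),
      ((-1 : ℂ) ^ k * Complex.exp ((j * k * π / m : ℝ) * Complex.I)) = 0 := by
  have hm0 : (m : ℝ) ≠ 0 := Nat.cast_ne_zero.mpr (by omega)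
  have hmc : (m : ℂ) ≠ 0 := Nat.cast_ne_zero.mpr (by omega)
  set r : ℂ := Complex.exp ((π * (j + m) / m : ℝ) * Complex.I) with hr
  have hterm : ∀ k ∈ Finset.range (2 * m),
      ((-1 : ℂ) ^ k * Complex.exp ((j * k * π / m : ℝ) * Complex.I)) = r ^ k := by
    intro k _
    rw [hr, ← Complex.exp_nat_mul, ← Complex.exp_pi_mul_I, ← Complex.exp_nat_mul,
      ← Complex.exp_add]
    congr 1
    push_cast
    field_simp
    ring
  have hrne : r ≠ 1 := by
    intro h
    rw [hr, Complex.exp_eq_one_iff] at h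
    rcases h with ⟨n, hn⟩
    have hI : (Complex.I : ℂ) ≠ 0 := Complex.I_ne_zero
    rw [show ((n : ℂ) * (2 * ↑π * Complex.I)) = ((n * (2 * π) : ℝ) : ℂ) * Complex.I by
      push_cast; ring] at hn
    have h2 : (π * (j + m) / m : ℝ) = n * (2 * π) :=
      Complex.ofReal_inj.mp (mul_right_cancel₀ hI hn)
    have h3 : ((j : ℝ) + m) = n * (2 * m) := by
      field_simp at h2
      nlinarith [Real.pi_pos]
    have h4 : (j + m : ℤ) = n * (2 * m) := by exact_mod_cast h3
    have h2m : (1:ℤ) ≤ (m:ℤ) := by exact_mod_cast hm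
    rcases le_or_gt n 0 with h | h
    · have : n * (2 * m) ≤ 0 := mul_nonpos_of_nonpos_of_nonneg h (by positivity)
      omega
    · have : 2 * (m:ℤ) ≤ n * (2 * m) := le_mul_of_one_le_left (by positivity) h
      have hjm : (j:ℤ) ≤ (m:ℤ) - 1 := by
        have : j ≤ m - 1 := hj2
        omega
      omega
  calc ∑ k ∈ Finset.range (2 * m),
        ((-1 : ℂ) ^ k * Complex.exp ((j * k * π / m : ℝ) * Complex.I))
      = ∑ k ∈ Finset.range (2 * m), r ^ k := Finset.sum_congr rfl hterm
    _ = (r ^ (2 * m) - 1) / (r - 1) := geom_sum_eq hrne _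
    _ = 0 := by
        have : r ^ (2 * m) = 1 := by
          rw [hr, ← Complex.exp_nat_mul]
          rw [show ((2 * m : ℕ) : ℂ) * (((π * (j + m) / m : ℝ) : ℂ) * Complex.I)
            = ((j + m : ℕ) : ℤ) * (2 * ↑π * Complex.I) by push_cast; field_simp]
          exact Complex.exp_int_mul_two_pi_mul_I _
        rw [this]
        simp

lemma key_cos (m j : ℕ) (hm : 1 ≤ m) (hj1 : 1 ≤ j) (hj2 : j ≤ m - 1) :
    ∑ k ∈ Finset.range (2 * m), (-1 : ℝ) ^ k * Real.cos (j * k * π / m) = 0 := by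
  have h := congrArg Complex.re (key_complex m j hm hj1 hj2)
  rw [Complex.re_sum] at h
  rw [Complex.zero_re] at h
  rw [← h]
  refine Finset.sum_congr rfl fun k _ => ?_
  rw [show ((-1:ℂ)^k) = (((-1:ℝ)^k : ℝ) : ℂ) by push_cast; ring,
    Complex.re_ofReal_mul, Complex.exp_ofReal_mul_I_re]

lemma key_sin (m j : ℕ) (hm : 1 ≤ m) (hj1 : 1 ≤ j) (hj2 : j ≤ m - 1) :
    ∑ k ∈ Finset.range (2 * m), (-1 : ℝ) ^ k * Real.sin (j * k * π / m) = 0 := by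
  have h := congrArg Complex.im (key_complex m j hm hj1 hj2)
  rw [Complex.im_sum] at h
  rw [Complex.zero_im] at h
  rw [← h]
  refine Finset.sum_congr rfl fun k _ => ?_
  rw [show ((-1:ℂ)^k) = (((-1:ℝ)^k : ℝ) : ℂ) by push_cast; ring,
    Complex.im_ofReal_mul, Complex.exp_ofReal_mul_I_im]

theorem T_criterion_lower_bound_cos (m : ℕ) (hm : 1 ≤ m) (b₂ : ℝ) (hb₂ : b₂ ≠ 0)
    (q : ℝ → ℝ) (q₀ : ℝ) (α β : ℕ → ℝ)
    (hq : ∀ x, q x = q₀ + ∑ j ∈ Finset.Icc 1 (m - 1),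
      (α j * Real.cos (j * x) + β j * Real.sin (j * x))) :
    b₂ ^ 2 ≤ (1 / (2 * m)) * ∑ k ∈ Finset.range (2 * m),
      (q ((k : ℝ) * Real.pi / m) + b₂ * Real.cos (m * ((k : ℝ) * Real.pi / m))) ^ 2 := by
  have hm0 : (m : ℝ) ≠ 0 := Nat.cast_ne_zero.mpr (by omega)
  -- cos (m * x_k) = (-1)^k
  have hc : ∀ k : ℕ, Real.cos ((m : ℝ) * ((k : ℝ) * π / m)) = (-1 : ℝ) ^ k := by
    intro k
    rw [show (m : ℝ) * ((k : ℝ) * π / m) = (k : ℝ) * π by field_simp]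
    simpa using Real.cos_nat_mul_pi_sub 0 k
  -- alternating sum of q vanishes
  have qsum : ∑ k ∈ Finset.range (2 * m), (-1 : ℝ) ^ k * q ((k : ℝ) * π / m) = 0 := by
    have expand : ∀ k ∈ Finset.range (2 * m),
        (-1 : ℝ) ^ k * q ((k : ℝ) * π / m)
          = (-1 : ℝ) ^ k * q₀ + ∑ j ∈ Finset.Icc 1 (m - 1),
              (α j * ((-1 : ℝ) ^ k * Real.cos (j * k * π / m))
                + β j * ((-1 : ℝ) ^ k * Real.sin (j * k * π / m))) := by
      intro k _
      rw [hq, mul_add, Finset.mul_sum]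
      congr 1
      refine Finset.sum_congr rfl fun j _ => ?_
      rw [show (j : ℝ) * ((k : ℝ) * π / m) = (j : ℝ) * k * π / m by ring]
      ring
    rw [Finset.sum_congr rfl expand, Finset.sum_add_distrib, Finset.sum_comm]
    have h1 : ∑ k ∈ Finset.range (2 * m), (-1 : ℝ) ^ k * q₀ = 0 := by
      rw [← Finset.sum_mul, neg_one_geom_sum]
      simp [Nat.even_iff]
    have h2 : ∑ j ∈ Finset.Icc 1 (m - 1), ∑ k ∈ Finset.range (2 * m),
        (α j * ((-1 : ℝ) ^ k * Real.cos (j * k * π / m))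
          + β j * ((-1 : ℝ) ^ k * Real.sin (j * k * π / m))) = 0 := by
      refine Finset.sum_eq_zero fun j hj => ?_
      rw [Finset.mem_Icc] at hj
      rw [Finset.sum_add_distrib, ← Finset.mul_sum, ← Finset.mul_sum,
        key_cos m j hm hj.1 hj.2, key_sin m j hm hj.1 hj.2]
      ring
    rw [h1, h2, add_zero]
  -- expand the square
  have expand2 : ∀ k ∈ Finset.range (2 * m),
      (q ((k : ℝ) * π / m) + b₂ * Real.cos ((m : ℝ) * ((k : ℝ) * π / m))) ^ 2
        = q ((k : ℝ) * π / m) ^ 2 + 2 * b₂ * ((-1 : ℝ) ^ k * q ((k : ℝ) * π / m)) + b₂ ^ 2 := by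
    intro k _
    rw [hc k]
    have hone : ((-1 : ℝ) ^ k) ^ 2 = 1 := by
      rw [← pow_mul, mul_comm, pow_mul]; norm_num
    nlinarith [hone]
  rw [Finset.sum_congr rfl expand2, Finset.sum_add_distrib, Finset.sum_add_distrib,
    ← Finset.mul_sum, qsum, Finset.sum_const, Finset.card_range]
  have hsq : 0 ≤ ∑ k ∈ Finset.range (2 * m), q ((k : ℝ) * π / m) ^ 2 :=
    Finset.sum_nonneg fun k _ => sq_nonneg _
  have h2m : (0 : ℝ) < 2 * m := by positivity
  rw [mul_zero, add_zero, mul_add, nsmul_eq_mul]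
  have : 1 / (2 * (m : ℝ)) * ((2 * m : ℕ) * b₂ ^ 2) = b₂ ^ 2 := by
    push_cast
    field_simp
  rw [this]
  have hpos : 0 ≤ 1 / (2 * (m:ℝ)) * ∑ k ∈ Finset.range (2 * m), q ((k : ℝ) * π / m) ^ 2 :=
    mul_nonneg (le_of_lt (one_div_pos.mpr h2m)) hsq
  linarith
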